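/- Let w : ℝ → ℝ be a C², even function with w″(r) ≥ ρ for all r ∈ ℝ (ρ ∈ ℝ). Then the function W : ℝ^d → ℝ defined by W(z) = w(|z|) is C², and Hess W(z) v · v ≥ ρ |v|² for all z, v ∈ ℝ^d. -/

import Mathlib

open Filter Topology Real ContinuousLinearMap

section Aux

variable {E : Type*} [NormedAddCommGroup E] [InnerProductSpace ℝ E]

/-- The bilinear inner ℝ product as a continuous linear map, over ℝ. -/
noncomputable def innerB : E →L[ℝ] E →L[ℝ] ℝ := innerSL ℝ

lemma innerB_apply (z v : E) : innerB z v = inner ℝ z v := rfl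

lemma norm_innerB_apply (z : E) : ‖(innerB z : E →L[ℝ] ℝ)‖ = ‖z‖ :=
  innerSL_apply_norm ℝ z

/-- The derivative of the norm away from zero. -/
lemma hasFDerivAt_norm' {z : E} (hz : z ≠ 0) :
    HasFDerivAt (fun x : E => ‖x‖) (‖z‖⁻¹ • innerB z) z := by
  have hz' : (0:ℝ) < ‖z‖ := norm_pos_iff.2 hz
  have h1 : HasFDerivAt (fun x : E => ‖x‖ ^ 2) ((2:ℕ) • innerSL ℝ z) z :=
    (hasStrictFDerivAt_norm_sq z).hasFDerivAt
  have h2 : HasDerivAt Real.sqrt (1 / (2 * Real.sqrt (‖z‖ ^ 2))) (‖z‖ ^ 2) :=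
    Real.hasDerivAt_sqrt (by positivity)
  have h3 := h2.comp_hasFDerivAt z h1
  have heq : Real.sqrt ∘ (fun x : E => ‖x‖ ^ 2) = fun x : E => ‖x‖ := by
    funext x; simp only [Function.comp_apply]; rw [Real.sqrt_sq (norm_nonneg x)]
  rw [heq] at h3
  refine h3.congr_fderiv ?_
  rw [Real.sqrt_sq (norm_nonneg z)]
  ext v
  simp only [ContinuousLinearMap.smul_apply, smul_eq_mul, innerB,
    ContinuousLinearMap.coe_smul', Pi.smul_apply, nsmul_eq_mul, Nat.cast_ofNat]
  field_simp

/-- The slope function `w'(r)/r`, extended by `w''(0)` at the origin. -/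
noncomputable def cfun (w : ℝ → ℝ) : ℝ → ℝ := fun r =>
  if r = 0 then deriv (deriv w) 0 else deriv w r / r

/-- First derivative of `z ↦ w ‖z‖`. -/
noncomputable def Fmap (w : ℝ → ℝ) (z : E) : E →L[ℝ] ℝ := cfun w ‖z‖ • innerB z

/-- Second derivative of `z ↦ w ‖z‖`. -/
noncomputable def Gmap (w : ℝ → ℝ) (z : E) : E →L[ℝ] E →L[ℝ] ℝ :=
  ((deriv (deriv w) ‖z‖ - cfun w ‖z‖) / ‖z‖ ^ 2) • (innerB z).smulRight (innerB z)
    + cfun w ‖z‖ • innerB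

end Aux

set_option maxHeartbeats 2000000 in
set_option synthInstance.maxHeartbeats 1000000 in
/-- If `w : ℝ → ℝ` is `C²`, even, and `ρ`-convex (`w'' ≥ ρ`), then
`W(z) = w(|z|)` on `ℝ^d` is `C²` and `ρ`-convex. -/
theorem radial_convexity (d : ℕ) (w : ℝ → ℝ) (hw : ContDiff ℝ 2 w)
    (heven : ∀ r : ℝ, w (-r) = w r) (ρ : ℝ)
    (hconv : ∀ r : ℝ, ρ ≤ deriv (deriv w) r) :
    ContDiff ℝ 2 (fun z : EuclideanSpace ℝ (Fin d) => w ‖z‖) ∧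
    ∀ z v : EuclideanSpace ℝ (Fin d),
      ρ * ‖v‖ ^ 2 ≤
        fderiv ℝ (fderiv ℝ (fun z : EuclideanSpace ℝ (Fin d) => w ‖z‖)) z v v := by
  set w1 := deriv w with hw1def
  set w2 := deriv (deriv w) with hw2def
  -- basic regularity facts
  have hw11 : ContDiff ℝ ((1:WithTop ℕ∞) + 1) w := by
    rw [show ((1:WithTop ℕ∞) + 1) = 2 from rfl]; exact hw
  rw [contDiff_succ_iff_deriv] at hw11
  have hwd : Differentiable ℝ w := hw11.1
  have hw1C : ContDiff ℝ 1 w1 := hw11.2.2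
  have hw1d : Differentiable ℝ w1 := hw1C.differentiable one_ne_zero
  have hw2c : Continuous w2 := (contDiff_one_iff_deriv.mp hw1C).2
  have hw1c : Continuous w1 := hw1d.continuous
  have hw1h : ∀ r : ℝ, HasDerivAt w1 (w2 r) r := fun r => (hw1d r).hasDerivAt
  -- w' is odd, so w'(0) = 0
  have h10 : w1 0 = 0 := by
    have h1 : deriv (fun x : ℝ => w (-x)) 0 = - deriv w (-0) := deriv_comp_neg w 0
    have h2 : (fun x : ℝ => w (-x)) = w := funext heven
    rw [h2] at h1
    simp only [neg_zero] at h1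
    have : w1 0 = - w1 0 := h1
    linarith
  -- value of the extended slope matches for r ≠ 0
  have hcval : ∀ r : ℝ, r ≠ 0 → cfun w r = w1 r / r := by
    intro r hr; simp [cfun, hr, hw1def]
  have hc0 : cfun w 0 = w2 0 := by simp [cfun, hw2def]
  -- the extended slope is continuous
  have hccont : Continuous (cfun w) := by
    rw [continuous_iff_continuousAt]
    intro r
    rcases eq_or_ne r 0 with rfl | hr
    · have hslope : Tendsto (slope w1 0) (𝓝[≠] 0) (𝓝 (w2 0)) :=
        hasDerivAt_iff_tendsto_slope.mp (hw1h 0)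
      have h1 : Tendsto (cfun w) (𝓝[≠] (0:ℝ)) (𝓝 (cfun w 0)) := by
        rw [hc0]
        refine hslope.congr' ?_
        filter_upwards [self_mem_nhdsWithin] with s hs
        have hs' : s ≠ 0 := hs
        rw [hcval s hs', slope_def_field]
        simp [h10, div_eq_mul_inv]
      unfold ContinuousAt
      rw [← nhdsNE_sup_pure 0]
      exact h1.sup (tendsto_pure_nhds _ _)
    · have hev : (fun s => w1 s / s) =ᶠ[𝓝 r] cfun w := by
        filter_upwards [isOpen_ne.mem_nhds hr] with s hs
        exact (hcval s hs).symm
      exact ContinuousAt.congr ((hw1c.continuousAt).div continuousAt_id hr) hev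
  -- the extended slope is bounded below by ρ
  have hcρ : ∀ r : ℝ, ρ ≤ cfun w r := by
    intro r
    rcases lt_trichotomy r 0 with hr | hr | hr
    · obtain ⟨ξ, _, hξ⟩ := exists_hasDerivAt_eq_slope w1 w2 hr
        hw1c.continuousOn (fun x _ => hw1h x)
      rw [hcval r hr.ne]
      have : w1 r / r = w2 ξ := by
        rw [hξ, h10]
        rw [zero_sub, zero_sub, neg_div_neg_eq]
      rw [this]; exact hconv ξ
    · rw [hr, hc0]; exact hconv 0
    · obtain ⟨ξ, _, hξ⟩ := exists_hasDerivAt_eq_slope w1 w2 hr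
        hw1c.continuousOn (fun x _ => hw1h x)
      rw [hcval r hr.ne']
      have : w1 r / r = w2 ξ := by rw [hξ, h10]; simp
      rw [this]; exact hconv ξ
  -- first derivative
  have hFd : ∀ z : EuclideanSpace ℝ (Fin d), HasFDerivAt (fun z : EuclideanSpace ℝ (Fin d) => w ‖z‖) (Fmap w z) z := by
    intro z
    rcases eq_or_ne z 0 with rfl | hz
    · rw [hasFDerivAt_iff_isLittleO_nhds_zero]
      have hw0 : HasDerivAt w 0 0 := by
        have := (hwd 0).hasDerivAt
        rwa [show deriv w 0 = 0 from h10] at this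
      have h1 : (fun t : ℝ => w t - w 0) =o[𝓝 0] (fun t : ℝ => t) := by
        have := hasDerivAt_iff_isLittleO_nhds_zero.mp hw0
        simpa using this
      have h2 : (fun h : EuclideanSpace ℝ (Fin d) => w ‖h‖ - w 0) =o[𝓝 0] (fun h : EuclideanSpace ℝ (Fin d) => ‖h‖) :=
        h1.comp_tendsto tendsto_norm_zero
      have h3 : (fun h : EuclideanSpace ℝ (Fin d) => w ‖h‖ - w 0) =o[𝓝 0] (fun h : EuclideanSpace ℝ (Fin d) => h) :=
        Asymptotics.isLittleO_norm_right.mp h2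
      refine h3.congr' ?_ (by rfl)
      filter_upwards with h
      simp [Fmap]
    · have hr : (0:ℝ) < ‖z‖ := norm_pos_iff.2 hz
      have hq : HasDerivAt (fun s : ℝ => w s) (w1 ‖z‖) ‖z‖ := (hwd ‖z‖).hasDerivAt
      have h1 : HasFDerivAt (fun x : EuclideanSpace ℝ (Fin d) => w ‖x‖) (w1 ‖z‖ • (‖z‖⁻¹ • innerB z)) z :=
        hq.comp_hasFDerivAt z (hasFDerivAt_norm' hz)
      convert h1 using 1
      rw [Fmap, hcval _ hr.ne', smul_smul, div_eq_mul_inv]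
  -- second derivative
  have hGd : ∀ z : EuclideanSpace ℝ (Fin d), HasFDerivAt (fun x : EuclideanSpace ℝ (Fin d) => Fmap w x) (Gmap w z) z := by
    intro z
    rcases eq_or_ne z 0 with rfl | hz
    · have hG0 : Gmap w (0:EuclideanSpace ℝ (Fin d)) = cfun w 0 • innerB := by
        ext v u
        simp [Gmap]
      rw [hG0, hasFDerivAt_iff_isLittleO_nhds_zero]
      rw [Asymptotics.isLittleO_iff]
      intro ε hε
      have htc : Tendsto (fun h : EuclideanSpace ℝ (Fin d) => cfun w ‖h‖) (𝓝 0) (𝓝 (cfun w 0)) := by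
        have := (hccont.comp continuous_norm).tendsto (0:EuclideanSpace ℝ (Fin d))
        simpa [Function.comp_def] using this
      have hev := Metric.tendsto_nhds.mp htc ε hε
      filter_upwards [hev] with h hh
      have hval : Fmap w ((0:EuclideanSpace ℝ (Fin d)) + h) - Fmap w 0 - (cfun w 0 • innerB) h
          = (cfun w ‖h‖ - cfun w 0) • innerB h := by
        simp [Fmap, sub_smul]
        exact (sub_smul _ _ _).symm
      rw [hval]
      rw [Real.dist_eq] at hh
      calc ‖(cfun w ‖h‖ - cfun w 0) • innerB h‖
          ≤ ‖cfun w ‖h‖ - cfun w 0‖ * ‖innerB h‖ := by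
            exact ContinuousLinearMap.opNorm_smul_le (cfun w ‖h‖ - cfun w 0) (innerB h)
        _ = |cfun w ‖h‖ - cfun w 0| * ‖h‖ := by
            rw [norm_innerB_apply, Real.norm_eq_abs]
        _ ≤ ε * ‖h‖ := mul_le_mul_of_nonneg_right (le_of_lt hh) (norm_nonneg h)
    · have hr : (0:ℝ) < ‖z‖ := norm_pos_iff.2 hz
      -- derivative of the scalar coefficient
      have hq : HasDerivAt (fun s : ℝ => w1 s / s)
          ((w2 ‖z‖ * ‖z‖ - w1 ‖z‖ * 1) / ‖z‖ ^ 2) ‖z‖ :=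
        (hw1h ‖z‖).div (hasDerivAt_id ‖z‖) hr.ne'
      have hφ : HasFDerivAt (fun x : EuclideanSpace ℝ (Fin d) => w1 ‖x‖ / ‖x‖)
          (((w2 ‖z‖ * ‖z‖ - w1 ‖z‖ * 1) / ‖z‖ ^ 2) • (‖z‖⁻¹ • innerB z)) z :=
        hq.comp_hasFDerivAt z (hasFDerivAt_norm' hz)
      have hψ : HasFDerivAt (fun x : EuclideanSpace ℝ (Fin d) => innerB (E := EuclideanSpace ℝ (Fin d)) x) innerB z :=
        innerB.hasFDerivAt
      have hs := hφ.smul hψ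
      have hFeq : (fun x : EuclideanSpace ℝ (Fin d) => Fmap w x) =ᶠ[𝓝 z] fun x => (w1 ‖x‖ / ‖x‖) • innerB x := by
        filter_upwards [isOpen_ne.mem_nhds hz] with x hx
        rw [Fmap, hcval _ (norm_pos_iff.2 hx).ne']
      refine (hs.congr_of_eventuallyEq ?_).congr_fderiv ?_
      · exact hFeq
      · ext v u
        simp only [Gmap, hcval _ hr.ne', ContinuousLinearMap.add_apply,
          ContinuousLinearMap.smul_apply, ContinuousLinearMap.smulRight_apply,
          ContinuousLinearMap.coe_smul', Pi.smul_apply, smul_eq_mul]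
        field_simp
        ring
  -- continuity of the second derivative
  have hGcont : Continuous (fun x : EuclideanSpace ℝ (Fin d) => Gmap w x) := by
    rw [continuous_clm_apply]
    intro v
    rw [continuous_clm_apply]
    intro u
    have hval : (fun z : EuclideanSpace ℝ (Fin d) => Gmap w z v u)
        = fun z : EuclideanSpace ℝ (Fin d) =>
            (w2 ‖z‖ - cfun w ‖z‖) / ‖z‖ ^ 2 * ((inner ℝ z v : ℝ) * (inner ℝ z u : ℝ))
              + cfun w ‖z‖ * (inner ℝ v u : ℝ) := by
      funext z
      simp only [Gmap, ContinuousLinearMap.add_apply, ContinuousLinearMap.smul_apply,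
        ContinuousLinearMap.smulRight_apply, ContinuousLinearMap.coe_smul',
        Pi.smul_apply, smul_eq_mul, innerB_apply, hw2def]
    rw [hval]
    refine Continuous.add ?_ (((hccont.comp continuous_norm).mul continuous_const))
    rw [continuous_iff_continuousAt]
    intro z
    rcases eq_or_ne z 0 with rfl | hz
    · have h0 : (w2 ‖(0:EuclideanSpace ℝ (Fin d))‖ - cfun w ‖(0:EuclideanSpace ℝ (Fin d))‖)
          / ‖(0:EuclideanSpace ℝ (Fin d))‖ ^ 2
          * ((inner ℝ (0:EuclideanSpace ℝ (Fin d)) v : ℝ)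
            * (inner ℝ (0:EuclideanSpace ℝ (Fin d)) u : ℝ)) = 0 := by
        simp
      unfold ContinuousAt
      beta_reduce
      rw [h0]
      refine squeeze_zero_norm (a := fun z : EuclideanSpace ℝ (Fin d) =>
        |w2 ‖z‖ - cfun w ‖z‖| * (‖v‖ * ‖u‖)) ?_ ?_
      · intro z
        rw [Real.norm_eq_abs]
        rcases eq_or_ne z 0 with rfl | hz0
        · simp
          positivity
        · have hr : (0:ℝ) < ‖z‖ := norm_pos_iff.2 hz0
          have h1 := abs_real_inner_le_norm z v
          have h2 := abs_real_inner_le_norm z u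
          rw [abs_mul, abs_div, abs_of_pos (by positivity : (0:ℝ) < ‖z‖ ^ 2),
            div_mul_eq_mul_div, div_le_iff₀ (by positivity : (0:ℝ) < ‖z‖ ^ 2), abs_mul]
          calc |w2 ‖z‖ - cfun w ‖z‖| * (|(inner ℝ z v : ℝ)| * |(inner ℝ z u : ℝ)|)
              ≤ |w2 ‖z‖ - cfun w ‖z‖| * ((‖z‖ * ‖v‖) * (‖z‖ * ‖u‖)) := by
                refine mul_le_mul_of_nonneg_left ?_ (abs_nonneg _)
                exact mul_le_mul h1 h2 (abs_nonneg _) (by positivity)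
            _ = |w2 ‖z‖ - cfun w ‖z‖| * (‖v‖ * ‖u‖) * ‖z‖ ^ 2 := by ring
      · have h1 : Tendsto (fun z : EuclideanSpace ℝ (Fin d) => w2 ‖z‖ - cfun w ‖z‖)
            (𝓝 0) (𝓝 0) := by
          have := ((hw2c.sub hccont).comp continuous_norm).tendsto (0:EuclideanSpace ℝ (Fin d))
          simpa [Function.comp_def, hc0] using this
        have := h1.abs.mul_const (‖v‖ * ‖u‖)
        simpa using this
    · have hr2 : (‖z‖:ℝ) ^ 2 ≠ 0 := by
        have : (0:ℝ) < ‖z‖ := norm_pos_iff.2 hz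
        positivity
      refine ContinuousAt.mul ?_ ?_
      · exact ContinuousAt.div
          (((hw2c.comp continuous_norm).sub (hccont.comp continuous_norm)).continuousAt)
          ((continuous_norm.pow 2).continuousAt) hr2
      · exact ContinuousAt.mul
          ((continuous_id.inner (continuous_const : Continuous fun _ : EuclideanSpace ℝ (Fin d) => v)).continuousAt)
          ((continuous_id.inner (continuous_const : Continuous fun _ : EuclideanSpace ℝ (Fin d) => u)).continuousAt)
  -- assemble
  have hfW : fderiv ℝ (fun z : EuclideanSpace ℝ (Fin d) => w ‖z‖) = Fmap w := funext fun z => (hFd z).fderiv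
  have hfF : fderiv ℝ (fun x : EuclideanSpace ℝ (Fin d) => Fmap w x) = Gmap w := funext fun z => (hGd z).fderiv
  constructor
  · rw [show (2 : WithTop ℕ∞) = 1 + 1 from by norm_num, contDiff_succ_iff_fderiv]
    refine ⟨fun z => (hFd z).differentiableAt, by simp, ?_⟩
    rw [hfW, contDiff_one_iff_fderiv]
    exact ⟨fun z => (hGd z).differentiableAt, by rw [hfF]; exact hGcont⟩
  · intro z v
    rw [hfW, hfF]
    have hG : Gmap w z v v = ((w2 ‖z‖ - cfun w ‖z‖) / ‖z‖ ^ 2)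
        * ((inner ℝ z v : ℝ) * (inner ℝ z v : ℝ)) + cfun w ‖z‖ * (inner ℝ v v : ℝ) := by
      simp [Gmap, innerB_apply, hw2def]
    rw [hG, real_inner_self_eq_norm_sq]
    rcases eq_or_ne z 0 with rfl | hz
    · have : (inner ℝ (0:EuclideanSpace ℝ (Fin d)) v : ℝ) = 0 := inner_zero_left v
      rw [this]
      have := hcρ (‖(0:EuclideanSpace ℝ (Fin d))‖)
      nlinarith [sq_nonneg ‖v‖]
    · have hr : (0:ℝ) < ‖z‖ := norm_pos_iff.2 hz
      have hCS : (inner ℝ z v : ℝ) * (inner ℝ z v : ℝ) ≤ ‖z‖ ^ 2 * ‖v‖ ^ 2 := by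
        have := abs_real_inner_le_norm z v
        nlinarith [abs_nonneg (inner ℝ z v : ℝ), le_abs_self (inner ℝ z v : ℝ),
          neg_abs_le (inner ℝ z v : ℝ)]
      set s : ℝ := (inner ℝ z v : ℝ) * (inner ℝ z v : ℝ) / ‖z‖ ^ 2 with hs
      have hs0 : 0 ≤ s := by
        apply div_nonneg (mul_self_nonneg _) (by positivity)
      have hs1 : s ≤ ‖v‖ ^ 2 := by
        rw [hs, div_le_iff₀ (by positivity : (0:ℝ) < ‖z‖^2)]
        nlinarith
      have hdiv : ((w2 ‖z‖ - cfun w ‖z‖) / ‖z‖ ^ 2) * ((inner ℝ z v : ℝ) * (inner ℝ z v : ℝ))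
          = (w2 ‖z‖ - cfun w ‖z‖) * s := by
        rw [hs]; field_simp
      rw [hdiv]
      have hA := mul_nonneg (sub_nonneg.2 (hconv ‖z‖)) hs0
      have hB := mul_nonneg (sub_nonneg.2 (hcρ ‖z‖)) (sub_nonneg.2 hs1)
      nlinarith [hA, hB]
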